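/- Let v, w be permutations of {1,…,n}. Then the inequality ∏_{i=1}^n a_{i,v(i)} ≥ ∏_{i=1}^n a_{i,w(i)} holds for every totally nonnegative n×n real matrix A = (a_{i,j}) if and only if v ≤ w in the Bruhat order, i.e., if and only if for all i, j ∈ {1,…,n}, #{k ≤ i : v(k) ≤ j} ≥ #{k ≤ i : w(k) ≤ j}. -/

import Mathlib

open Matrix BigOperators

/-- An `n × n` real matrix is totally nonnegative if all its minors are nonnegative. -/
def TotallyNonneg {n : ℕ} (A : Matrix (Fin n) (Fin n) ℝ) : Prop :=
  ∀ (k : ℕ) (f g : Fin k → Fin n), StrictMono f → StrictMono g →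
    0 ≤ (A.submatrix f g).det

namespace BruhatTN

variable {n : ℕ}

/-- The Ehresmann count. -/
def cnt (σ : Equiv.Perm (Fin n)) (i j : Fin n) : ℕ :=
  (Finset.univ.filter fun k => k ≤ i ∧ σ k ≤ j).card

lemma entry_nonneg {A : Matrix (Fin n) (Fin n) ℝ} (hA : TotallyNonneg A) (x y : Fin n) :
    0 ≤ A x y := by
  have h := hA 1 (fun _ => x) (fun _ => y) (Subsingleton.strictMono _) (Subsingleton.strictMono _)
  simpa [Matrix.det_fin_one] using h

lemma minor2 {A : Matrix (Fin n) (Fin n) ℝ} (hA : TotallyNonneg A)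
    {a b x y : Fin n} (hab : a < b) (hxy : x < y) :
    A a y * A b x ≤ A a x * A b y := by
  have hf : StrictMono (![a, b] : Fin 2 → Fin n) := by
    intro s t hst
    fin_cases s <;> fin_cases t <;> simp_all <;> omega
  have hg : StrictMono (![x, y] : Fin 2 → Fin n) := by
    intro s t hst
    fin_cases s <;> fin_cases t <;> simp_all <;> omega
  have h := hA 2 ![a, b] ![x, y] hf hg
  rw [Matrix.det_fin_two] at h
  simp [Matrix.submatrix_apply] at h
  linarith

lemma prod_swap_le {A : Matrix (Fin n) (Fin n) ℝ} (hA : TotallyNonneg A)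
    (v : Equiv.Perm (Fin n)) {a b : Fin n} (hab : a < b) (hv : v a < v b) :
    ∏ i, A i ((v * Equiv.swap a b) i) ≤ ∏ i, A i (v i) := by
  classical
  have hne : a ≠ b := ne_of_lt hab
  have hbmem : b ∈ Finset.univ.erase a := Finset.mem_erase.mpr ⟨hne.symm, Finset.mem_univ b⟩
  have e1 : ∀ f : Fin n → ℝ, ∏ i, f i = f a * (f b * ∏ i ∈ (Finset.univ.erase a).erase b, f i) := by
    intro f
    rw [Finset.mul_prod_erase _ f hbmem, Finset.mul_prod_erase _ f (Finset.mem_univ a)]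
  rw [e1 (fun i => A i ((v * Equiv.swap a b) i)), e1 (fun i => A i (v i))]
  have hrest : ∀ i ∈ (Finset.univ.erase a).erase b,
      A i ((v * Equiv.swap a b) i) = A i (v i) := by
    intro i hi
    simp only [Finset.mem_erase] at hi
    rw [Equiv.Perm.mul_apply, Equiv.swap_apply_of_ne_of_ne hi.2.1 hi.1]
  rw [Finset.prod_congr rfl hrest]
  have hR : 0 ≤ ∏ i ∈ (Finset.univ.erase a).erase b, A i (v i) :=
    Finset.prod_nonneg fun i _ => entry_nonneg hA i (v i)
  have hm : A a (v b) * A b (v a) ≤ A a (v a) * A b (v b) := minor2 hA hab hv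
  have h1 : (v * Equiv.swap a b) a = v b := by simp
  have h2 : (v * Equiv.swap a b) b = v a := by simp
  rw [h1, h2]
  calc A a (v b) * (A b (v a) * ∏ i ∈ (Finset.univ.erase a).erase b, A i (v i))
      = (A a (v b) * A b (v a)) * ∏ i ∈ (Finset.univ.erase a).erase b, A i (v i) := by ring
    _ ≤ (A a (v a) * A b (v b)) * ∏ i ∈ (Finset.univ.erase a).erase b, A i (v i) :=
        mul_le_mul_of_nonneg_right hm hR
    _ = A a (v a) * (A b (v b) * ∏ i ∈ (Finset.univ.erase a).erase b, A i (v i)) := by ring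

/-- Split a filtered count at a point `a ≤ i`. -/
lemma split_lt (p : Fin n → Prop) [DecidablePred p] (a i : Fin n) (ha : a ≤ i) :
    (Finset.univ.filter fun k => k ≤ i ∧ p k).card =
      (Finset.univ.filter fun k => k < a ∧ p k).card + (if p a then 1 else 0)
      + (Finset.univ.filter fun k => a < k ∧ k ≤ i ∧ p k).card := by
  classical
  have hcard : ∀ (q : Fin n → Prop) [DecidablePred q],
      (Finset.univ.filter q).card = ∑ k : Fin n, if q k then 1 else 0 :=
    fun q _ => Finset.card_filter q Finset.univ
  rw [hcard, hcard, hcard]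
  have key : ∀ k : Fin n, (if k ≤ i ∧ p k then 1 else 0) =
      ((if k < a ∧ p k then 1 else 0) + (if k = a ∧ p k then 1 else 0))
      + (if a < k ∧ k ≤ i ∧ p k then (1:ℕ) else 0) := by
    intro k
    by_cases hp : p k
    · simp only [hp, and_true]
      split_ifs <;> omega
    · simp [hp]
  rw [Finset.sum_congr rfl fun k _ => key k, Finset.sum_add_distrib, Finset.sum_add_distrib]
  have h2 : ∀ k : Fin n, (if k = a ∧ p k then (1:ℕ) else 0) =
      if k = a then (if p a then 1 else 0) else 0 := by
    intro k
    by_cases h : k = a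
    · subst h; simp
    · simp [h]
  rw [Finset.sum_congr rfl fun k _ => h2 k, Finset.sum_ite_eq' Finset.univ a
    (fun _ => if p a then (1:ℕ) else 0)]
  simp

lemma cnt_swap_lt (v : Equiv.Perm (Fin n)) {a b i : Fin n} (j : Fin n)
    (hia : i < a) (hab : a < b) :
    cnt (v * Equiv.swap a b) i j = cnt v i j := by
  unfold cnt
  congr 1
  apply Finset.filter_congr
  intro k _
  by_cases hk : k ≤ i
  · have h1 : k ≠ a := by omega
    have h2 : k ≠ b := by omega
    rw [Equiv.Perm.mul_apply, Equiv.swap_apply_of_ne_of_ne h1 h2]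
  · simp [hk]

lemma cnt_swap_ge (v : Equiv.Perm (Fin n)) {a b i : Fin n} (j : Fin n)
    (hbi : b ≤ i) (hab : a < b) :
    cnt (v * Equiv.swap a b) i j = cnt v i j := by
  classical
  unfold cnt
  apply Finset.card_bij' (fun k _ => Equiv.swap a b k) (fun k _ => Equiv.swap a b k)
  · intro k hk
    simp only [Finset.mem_filter, Finset.mem_univ, true_and] at hk ⊢
    refine ⟨?_, by simpa using hk.2⟩
    rcases eq_or_ne k a with rfl | h1
    · simpa [Equiv.swap_apply_left] using hbi
    rcases eq_or_ne k b with rfl | h2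
    · simp only [Equiv.swap_apply_right]; omega
    · rw [Equiv.swap_apply_of_ne_of_ne h1 h2]; exact hk.1
  · intro k hk
    simp only [Finset.mem_filter, Finset.mem_univ, true_and] at hk ⊢
    refine ⟨?_, by simpa using hk.2⟩
    rcases eq_or_ne k a with rfl | h1
    · simpa [Equiv.swap_apply_left] using hbi
    rcases eq_or_ne k b with rfl | h2
    · simp only [Equiv.swap_apply_right]; omega
    · rw [Equiv.swap_apply_of_ne_of_ne h1 h2]; exact hk.1
  · intro k _; simp
  · intro k _; simp

/-- In the middle range `a ≤ i < b`, the count of `v * swap a b` is the count with the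
`a`-term replaced. -/
lemma cnt_swap_mid (v : Equiv.Perm (Fin n)) {a b i : Fin n} (j : Fin n)
    (hai : a ≤ i) (hib : i < b) (hab : a < b) :
    cnt (v * Equiv.swap a b) i j =
      (Finset.univ.filter fun k => k < a ∧ v k ≤ j).card + (if v b ≤ j then 1 else 0)
      + (Finset.univ.filter fun k => a < k ∧ k ≤ i ∧ v k ≤ j).card := by
  unfold cnt
  rw [split_lt (fun k => (v * Equiv.swap a b) k ≤ j) a i hai]
  have h1 : (v * Equiv.swap a b) a = v b := by simp
  have e1 : (Finset.univ.filter fun k => k < a ∧ (v * Equiv.swap a b) k ≤ j) =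
      (Finset.univ.filter fun k => k < a ∧ v k ≤ j) := by
    apply Finset.filter_congr
    intro k _
    by_cases hk : k < a
    · have ha1 : k ≠ a := by omega
      have ha2 : k ≠ b := by omega
      rw [Equiv.Perm.mul_apply, Equiv.swap_apply_of_ne_of_ne ha1 ha2]
    · simp [hk]
  have e2 : (Finset.univ.filter fun k => a < k ∧ k ≤ i ∧ (v * Equiv.swap a b) k ≤ j) =
      (Finset.univ.filter fun k => a < k ∧ k ≤ i ∧ v k ≤ j) := by
    apply Finset.filter_congr
    intro k _
    by_cases hk : a < k ∧ k ≤ i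
    · have ha1 : k ≠ a := by omega
      have ha2 : k ≠ b := by omega
      rw [Equiv.Perm.mul_apply, Equiv.swap_apply_of_ne_of_ne ha1 ha2]
    · rw [not_and_or] at hk
      rcases hk with hk | hk <;> simp [hk]
  rw [h1, e1, e2]

lemma cnt_mid (v : Equiv.Perm (Fin n)) {a i : Fin n} (j : Fin n) (hai : a ≤ i) :
    cnt v i j =
      (Finset.univ.filter fun k => k < a ∧ v k ≤ j).card + (if v a ≤ j then 1 else 0)
      + (Finset.univ.filter fun k => a < k ∧ k ≤ i ∧ v k ≤ j).card :=
  split_lt (fun k => v k ≤ j) a i hai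

lemma seg_self (a : Fin n) (p : Fin n → Prop) [DecidablePred p] :
    (Finset.univ.filter fun k => a < k ∧ k ≤ a ∧ p k) = ∅ := by
  rw [Finset.filter_eq_empty_iff]
  rintro k - ⟨h1, h2, -⟩
  omega

lemma step (v w : Equiv.Perm (Fin n)) (hE : ∀ i j, cnt w i j ≤ cnt v i j) (hne : v ≠ w) :
    ∃ a b : Fin n, a < b ∧ v a < v b ∧
      (∀ i j, cnt w i j ≤ cnt (v * Equiv.swap a b) i j) ∧
      (∀ i j, cnt (v * Equiv.swap a b) i j ≤ cnt v i j) ∧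
      (cnt (v * Equiv.swap a b) a (v a) < cnt v a (v a)) := by
  classical
  have hexdis : (Finset.univ.filter fun k => v k ≠ w k).Nonempty := by
    by_contra h
    rw [Finset.not_nonempty_iff_eq_empty, Finset.filter_eq_empty_iff] at h
    exact hne (Equiv.ext fun k => by simpa using h (Finset.mem_univ k))
  set a := (Finset.univ.filter fun k => v k ≠ w k).min' hexdis with ha_def
  have haa : v a ≠ w a := by
    have := Finset.min'_mem _ hexdis
    rw [Finset.mem_filter] at this
    exact this.2
  have hagree : ∀ k, k < a → v k = w k := by
    intro k hk
    by_contra h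
    exact absurd (Finset.min'_le _ k (by simp [h])) (not_le.mpr hk)
  -- the left parts of the counts agree
  have hL : ∀ j, (Finset.univ.filter fun k => k < a ∧ v k ≤ j) =
      (Finset.univ.filter fun k => k < a ∧ w k ≤ j) := by
    intro j
    apply Finset.filter_congr
    intro k _
    by_cases hk : k < a
    · rw [hagree k hk]
    · simp [hk]
  -- v a < w a
  have hvw : v a < w a := by
    rcases lt_or_gt_of_ne haa with h | h
    · exact h
    · exfalso
      have h1 := hE a (w a)
      rw [cnt_mid v (w a) (le_refl a), cnt_mid w (w a) (le_refl a), hL] at h1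
      have hwle : w a ≤ w a := le_refl _
      have hvnle : ¬ v a ≤ w a := not_le.mpr h
      rw [if_pos hwle, if_neg hvnle, seg_self, seg_self, Finset.card_empty] at h1
      omega
  -- existence of a candidate for b
  have hbex : (Finset.univ.filter fun k => a < k ∧ v a < v k ∧ v k ≤ w a).Nonempty := by
    refine ⟨v⁻¹ (w a), ?_⟩
    have hv : v (v⁻¹ (w a)) = w a := Equiv.apply_symm_apply v (w a)
    have hgt : a < v⁻¹ (w a) := by
      rcases lt_trichotomy (v⁻¹ (w a)) a with h | h | h
      · exfalso
        have := hagree _ h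
        rw [hv] at this
        have : v⁻¹ (w a) = a := w.injective this.symm
        omega
      · exfalso; rw [h] at hv; exact haa (hv)
      · exact h
    simp only [Finset.mem_filter, Finset.mem_univ, true_and]
    exact ⟨hgt, by rw [hv]; exact hvw, by rw [hv]⟩
  set b := (Finset.univ.filter fun k => a < k ∧ v a < v k ∧ v k ≤ w a).min' hbex with hb_def
  obtain ⟨hab, hvab, hvbwa⟩ : a < b ∧ v a < v b ∧ v b ≤ w a := by
    have := Finset.min'_mem _ hbex
    rw [Finset.mem_filter] at this
    exact this.2
  have hkey : ∀ k, a < k → k < b → v k ≤ w a → v k < v a := by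
    intro k h1 h2 h3
    rcases lt_or_ge (v k) (v a) with h | h
    · exact h
    · exfalso
      have hne' : v k ≠ v a := fun hh => by
        have : k = a := v.injective hh
        omega
      have : v a < v k := lt_of_le_of_ne h (Ne.symm hne')
      exact absurd (Finset.min'_le _ k (by simp [h1, this, h3])) (not_le.mpr h2)
  refine ⟨a, b, hab, hvab, ?_, ?_, ?_⟩
  · -- cnt w ≤ cnt v'
    intro i j
    rcases lt_or_ge i a with hia | hai
    · rw [cnt_swap_lt v j hia hab]; exact hE i j
    rcases le_or_gt b i with hbi | hib
    · rw [cnt_swap_ge v j hbi hab]; exact hE i j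
    rw [cnt_swap_mid v j hai hib hab]
    rcases lt_or_ge j (v a) with hj1 | hj1
    · -- below the rectangle: counts agree with cnt v
      have e1 : ¬ v b ≤ j := by omega
      have e2 : ¬ v a ≤ j := by omega
      rw [if_neg e1]
      have h := hE i j
      rw [cnt_mid v j hai, if_neg e2] at h
      omega
    rcases le_or_gt (v b) j with hj2 | hj2
    · -- above the rectangle
      have e1 : v b ≤ j := hj2
      have e2 : v a ≤ j := by omega
      rw [if_pos e1]
      have := hE i j
      rw [cnt_mid v j hai, if_pos e2] at this
      omega
    · -- the core case : a ≤ i < b, v a ≤ j < v b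
      have hjwa : j < w a := by omega
      rw [if_neg (by omega : ¬ v b ≤ j)]
      -- expand cnt w i j
      rw [cnt_mid w j hai, ← hL, if_neg (by omega : ¬ w a ≤ j)]
      -- suffices to compare segment counts
      have hseg : (Finset.univ.filter fun k => a < k ∧ k ≤ i ∧ w k ≤ j).card ≤
          (Finset.univ.filter fun k => a < k ∧ k ≤ i ∧ v k ≤ j).card := by
        have s1 : (Finset.univ.filter fun k => a < k ∧ k ≤ i ∧ w k ≤ j).card ≤
            (Finset.univ.filter fun k => a < k ∧ k ≤ i ∧ w k ≤ w a).card := by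
          apply Finset.card_le_card
          intro k hk
          rw [Finset.mem_filter] at hk ⊢
          exact ⟨hk.1, hk.2.1, hk.2.2.1, le_trans hk.2.2.2 (le_of_lt hjwa)⟩
        have s2 : (Finset.univ.filter fun k => a < k ∧ k ≤ i ∧ w k ≤ w a).card ≤
            (Finset.univ.filter fun k => a < k ∧ k ≤ i ∧ v k ≤ w a).card := by
          have := hE i (w a)
          rw [cnt_mid v (w a) hai, cnt_mid w (w a) hai, hL,
            if_pos (le_refl (w a)), if_pos (le_of_lt hvw)] at this
          omega
        have s3 : (Finset.univ.filter fun k => a < k ∧ k ≤ i ∧ v k ≤ w a) =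
            (Finset.univ.filter fun k => a < k ∧ k ≤ i ∧ v k ≤ j) := by
          apply Finset.filter_congr
          intro k _
          by_cases hk : a < k ∧ k ≤ i
          · have hkb : k < b := lt_of_le_of_lt hk.2 hib
            simp only [hk.1, hk.2, true_and]
            constructor
            · intro h
              have := hkey k hk.1 hkb h
              omega
            · intro h; omega
          · rw [not_and_or] at hk
            rcases hk with hk | hk <;> simp [hk]
        rw [s3] at s2
        omega
      omega
  · -- cnt v' ≤ cnt v
    intro i j
    rcases lt_or_ge i a with hia | hai
    · rw [cnt_swap_lt v j hia hab]
    rcases le_or_gt b i with hbi | hib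
    · rw [cnt_swap_ge v j hbi hab]
    rw [cnt_swap_mid v j hai hib hab, cnt_mid v j hai]
    have : (if v b ≤ j then (1:ℕ) else 0) ≤ (if v a ≤ j then 1 else 0) := by
      split_ifs with h1 h2
      · omega
      · exact absurd (by omega : v a ≤ j) h2
      · omega
      · omega
    omega
  · -- strict decrease at (a, v a)
    rw [cnt_swap_mid v (v a) (le_refl a) hab hab, cnt_mid v (v a) (le_refl a)]
    rw [if_pos (le_refl (v a)), if_neg (by omega : ¬ v b ≤ v a)]
    omega

/-- The measure used for induction. -/
def M (v w : Equiv.Perm (Fin n)) : ℕ :=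
  ∑ p : Fin n × Fin n, (cnt v p.1 p.2 - cnt w p.1 p.2)

lemma bruhat_imp_prod (w : Equiv.Perm (Fin n)) :
    ∀ (N : ℕ) (v : Equiv.Perm (Fin n)), (∀ i j, cnt w i j ≤ cnt v i j) → M v w ≤ N →
      ∀ A : Matrix (Fin n) (Fin n) ℝ, TotallyNonneg A →
        (∏ i, A i (w i)) ≤ ∏ i, A i (v i) := by
  intro N
  induction N with
  | zero =>
    intro v hE hM A hA
    by_cases hvw : v = w
    · subst hvw; exact le_refl _
    obtain ⟨a, b, hab, hvab, hE', hle, hstrict⟩ := step v w hE hvw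
    exfalso
    have hlt : M (v * Equiv.swap a b) w < M v w := by
      apply Finset.sum_lt_sum
      · intro p _
        exact Nat.sub_le_sub_right (hle p.1 p.2) _
      · refine ⟨(a, v a), Finset.mem_univ _, ?_⟩
        dsimp only
        have h1 := hE' a (v a)
        have h2 := hE a (v a)
        omega
    omega
  | succ N ih =>
    intro v hE hM A hA
    by_cases hvw : v = w
    · subst hvw; exact le_refl _
    obtain ⟨a, b, hab, hvab, hE', hle, hstrict⟩ := step v w hE hvw
    have hlt : M (v * Equiv.swap a b) w < M v w := by
      apply Finset.sum_lt_sum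
      · intro p _
        exact Nat.sub_le_sub_right (hle p.1 p.2) _
      · refine ⟨(a, v a), Finset.mem_univ _, ?_⟩
        dsimp only
        have h1 := hE' a (v a)
        have h2 := hE a (v a)
        omega
    have hM' : M (v * Equiv.swap a b) w ≤ N := by omega
    calc (∏ i, A i (w i)) ≤ ∏ i, A i ((v * Equiv.swap a b) i) := ih _ hE' hM' A hA
      _ ≤ ∏ i, A i (v i) := prod_swap_le hA v hab hvab

/-- The block test matrix. -/
def B (i j : Fin n) : Matrix (Fin n) (Fin n) ℝ :=
  fun k l => if ((k ≤ i) ↔ (l ≤ j)) then 2 else 1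

lemma B_tn (i j : Fin n) : TotallyNonneg (B i j) := by
  intro k f g hf hg
  rcases k with _ | _ | _ | m
  · simp [Matrix.det_fin_zero]
  · rw [Matrix.det_fin_one]
    simp only [Matrix.submatrix_apply, B]
    split_ifs <;> norm_num
  · rw [Matrix.det_fin_two]
    simp only [Matrix.submatrix_apply, B]
    have hf01 : f 0 < f 1 := hf (by decide)
    have hg01 : g 0 < g 1 := hg (by decide)
    by_cases p0 : f 0 ≤ i <;> by_cases p1 : f 1 ≤ i <;>
      by_cases q0 : g 0 ≤ j <;> by_cases q1 : g 1 ≤ j <;>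
      first
        | omega
        | (simp only [p0, p1, q0, q1, iff_true, iff_false, not_true, not_false_iff,
            if_true, if_false, iff_self_iff]
           norm_num)
        | (simp [p0, p1, q0, q1]; norm_num)
        | simp [p0, p1, q0, q1]
  · -- size ≥ 3 : two rows are equal
    have hex : ∃ s t : Fin (m + 3), s ≠ t ∧ ((f s ≤ i) ↔ (f t ≤ i)) := by
      by_cases h01 : (f 0 ≤ i) ↔ (f 1 ≤ i)
      · exact ⟨0, 1, by simp [Fin.ext_iff], h01⟩
      by_cases h02 : (f 0 ≤ i) ↔ (f 2 ≤ i)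
      · exact ⟨0, 2, by simp [Fin.ext_iff, Nat.mod_eq_of_lt (show 2 < m + 3 by omega)], h02⟩
      · exact ⟨1, 2, by simp [Fin.ext_iff, Nat.mod_eq_of_lt (show 2 < m + 3 by omega)], by tauto⟩
    obtain ⟨s, t, hst, hiff⟩ := hex
    have hrow : ((B i j).submatrix f g) s = ((B i j).submatrix f g) t := by
      funext l
      simp only [Matrix.submatrix_apply, B]
      exact if_congr (iff_congr hiff Iff.rfl) rfl rfl
    rw [Matrix.det_zero_of_row_eq hst hrow]

lemma B_prod (i j : Fin n) (σ : Equiv.Perm (Fin n)) :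
    ∏ k, B i j k (σ k) =
      2 ^ (Finset.univ.filter fun k => ((k ≤ i) ↔ (σ k ≤ j))).card := by
  classical
  rw [← Finset.prod_filter_mul_prod_filter_not Finset.univ (fun k => (k ≤ i) ↔ (σ k ≤ j))]
  have h1 : ∀ k ∈ Finset.univ.filter fun k => ((k ≤ i) ↔ (σ k ≤ j)), B i j k (σ k) = 2 := by
    intro k hk
    rw [Finset.mem_filter] at hk
    exact if_pos hk.2
  have h2 : ∀ k ∈ Finset.univ.filter fun k => ¬((k ≤ i) ↔ (σ k ≤ j)), B i j k (σ k) = 1 := by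
    intro k hk
    rw [Finset.mem_filter] at hk
    exact if_neg hk.2
  rw [Finset.prod_congr rfl h1, Finset.prod_congr rfl h2, Finset.prod_const,
    Finset.prod_const_one, mul_one]

lemma card_split (p q : Fin n → Prop) [DecidablePred p] [DecidablePred q] :
    (Finset.univ.filter p).card =
      (Finset.univ.filter fun k => p k ∧ q k).card
      + (Finset.univ.filter fun k => p k ∧ ¬ q k).card := by
  classical
  have h := Finset.card_filter_add_card_filter_not (s := Finset.univ.filter p) (p := q)
  rw [Finset.filter_filter, Finset.filter_filter] at h
  omega

lemma E_card (i j : Fin n) (σ : Equiv.Perm (Fin n)) :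
    (Finset.univ.filter fun k => ((k ≤ i) ↔ (σ k ≤ j))).card + (i.1 + 1) + (j.1 + 1)
      = n + 2 * cnt σ i j := by
  classical
  have hsetP : (Finset.univ.filter fun k : Fin n => k ≤ i).card = i.1 + 1 := by
    have h : (Finset.univ.filter fun k : Fin n => k ≤ i) = Finset.Iic i := by
      ext k; simp [Finset.mem_Iic]
    rw [h, Fin.card_Iic]
  have hsetQ : (Finset.univ.filter fun k => σ k ≤ j).card = j.1 + 1 := by
    have h : (Finset.univ.filter fun k => σ k ≤ j).card
        = (Finset.univ.filter fun m : Fin n => m ≤ j).card := by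
      apply Finset.card_bij' (fun k _ => σ k) (fun m _ => σ⁻¹ m)
      · intro k hk; rw [Finset.mem_filter] at hk ⊢; exact ⟨Finset.mem_univ _, hk.2⟩
      · intro m hm; rw [Finset.mem_filter] at hm ⊢
        refine ⟨Finset.mem_univ _, ?_⟩
        simpa using hm.2
      · intro k _; simp
      · intro m _; simp
    rw [h]
    have h2 : (Finset.univ.filter fun m : Fin n => m ≤ j) = Finset.Iic j := by
      ext k; simp [Finset.mem_Iic]
    rw [h2, Fin.card_Iic]
  have sP := card_split (fun k : Fin n => k ≤ i) (fun k => σ k ≤ j)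
  have sQ := card_split (fun k => σ k ≤ j) (fun k : Fin n => k ≤ i)
  have sNP := card_split (fun k : Fin n => ¬ k ≤ i) (fun k => σ k ≤ j)
  have sE := card_split (fun k : Fin n => (k ≤ i) ↔ (σ k ≤ j)) (fun k => k ≤ i)
  have stot : (Finset.univ.filter fun k : Fin n => k ≤ i).card
      + (Finset.univ.filter fun k : Fin n => ¬ k ≤ i).card = n := by
    have h := Finset.card_filter_add_card_filter_not
      (s := (Finset.univ : Finset (Fin n))) (p := fun k => k ≤ i)
    simpa using h
  have e1 : (Finset.univ.filter fun k => ((k ≤ i) ↔ (σ k ≤ j)) ∧ k ≤ i)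
      = (Finset.univ.filter fun k => k ≤ i ∧ σ k ≤ j) := by
    apply Finset.filter_congr; intro k _; tauto
  have e2 : (Finset.univ.filter fun k => ((k ≤ i) ↔ (σ k ≤ j)) ∧ ¬ k ≤ i)
      = (Finset.univ.filter fun k => ¬ k ≤ i ∧ ¬ σ k ≤ j) := by
    apply Finset.filter_congr; intro k _; tauto
  have e3 : (Finset.univ.filter fun k => σ k ≤ j ∧ k ≤ i)
      = (Finset.univ.filter fun k => k ≤ i ∧ σ k ≤ j) := by
    apply Finset.filter_congr; intro k _; tauto
  have e4 : (Finset.univ.filter fun k => σ k ≤ j ∧ ¬ k ≤ i)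
      = (Finset.univ.filter fun k => ¬ k ≤ i ∧ σ k ≤ j) := by
    apply Finset.filter_congr; intro k _; tauto
  rw [e1, e2] at sE
  rw [e3, e4] at sQ
  have hcnt : cnt σ i j = (Finset.univ.filter fun k => k ≤ i ∧ σ k ≤ j).card := rfl
  omega

theorem main (v w : Equiv.Perm (Fin n)) :
    (∀ A : Matrix (Fin n) (Fin n) ℝ, TotallyNonneg A →
      (∏ i, A i (w i)) ≤ ∏ i, A i (v i)) ↔
    (∀ i j : Fin n, cnt w i j ≤ cnt v i j) := by
  constructor
  · intro hprod i j
    by_contra hc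
    push_neg at hc
    have h := hprod (B i j) (B_tn i j)
    rw [B_prod, B_prod] at h
    have hEv := E_card i j v
    have hEw := E_card i j w
    have hlt : (Finset.univ.filter fun k => ((k ≤ i) ↔ (v k ≤ j))).card <
        (Finset.univ.filter fun k => ((k ≤ i) ↔ (w k ≤ j))).card := by omega
    have : (2:ℝ) ^ (Finset.univ.filter fun k => ((k ≤ i) ↔ (v k ≤ j))).card <
        2 ^ (Finset.univ.filter fun k => ((k ≤ i) ↔ (w k ≤ j))).card := by
      exact pow_lt_pow_right₀ one_lt_two hlt
    linarith
  · intro hE A hA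
    exact bruhat_imp_prod w (M v w) v hE (le_refl _) A hA

end BruhatTN

theorem stmt1 (n : ℕ) (v w : Equiv.Perm (Fin n)) :
    (∀ A : Matrix (Fin n) (Fin n) ℝ, TotallyNonneg A →
      (∏ i, A i (w i)) ≤ ∏ i, A i (v i)) ↔
    (∀ i j : Fin n,
      (Finset.univ.filter fun k => k ≤ i ∧ w k ≤ j).card ≤
      (Finset.univ.filter fun k => k ≤ i ∧ v k ≤ j).card) :=
  BruhatTN.main v w
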